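/- arXiv:1610.03740 — 4 statements merged into one kernel-verified Lean document; each statement's English description precedes it below -/
import Mathlib

section
/- Let b ∈ ℤ_p and n ∈ ℕ with base-p expansions b = b₀ + b₁p + b₂p² + … and n = n₀ + n₁p + … + n_s p^s (all digits in {0,…,p-1}). Then the binomial coefficient C(b,n) is congruent to the product ∏_{i=0}^{s} C(b_i, n_i) modulo p. -/
open Finset

section Aux
lemma aux_digit {p : ℕ} (hp : 1 < p) :
    ∀ (j : ℕ) (f : ℕ → ℕ), (∀ i, f i < p) → ∀ L, j < L →
      (∑ i ∈ Finset.range L, f i * p ^ i) / p ^ j % p = f j := by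
  intro j
  induction j with
  | zero =>
    intro f hf L hL
    match L, hL with
    | L + 1, _ =>
      rw [Finset.sum_range_succ']
      have h : ∑ i ∈ Finset.range L, f (i + 1) * p ^ (i + 1)
          = p * ∑ i ∈ Finset.range L, f (i + 1) * p ^ i := by
        rw [Finset.mul_sum]; exact Finset.sum_congr rfl fun i _ => by ring
      rw [h, pow_zero, mul_one, Nat.div_one, Nat.mul_add_mod, Nat.mod_eq_of_lt (hf 0)]
  | succ j ih =>
    intro f hf L hL
    match L, hL with
    | L + 1, hL =>
      rw [Finset.sum_range_succ']
      have h : ∑ i ∈ Finset.range L, f (i + 1) * p ^ (i + 1)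
          = p * ∑ i ∈ Finset.range L, f (i + 1) * p ^ i := by
        rw [Finset.mul_sum]; exact Finset.sum_congr rfl fun i _ => by ring
      have hp0 : 0 < p := by omega
      rw [h, pow_zero, mul_one, pow_succ', ← Nat.div_div_eq_div_mul,
        Nat.mul_add_div hp0, Nat.div_eq_of_lt (hf 0), Nat.add_zero]
      exact ih (fun i => f (i + 1)) (fun i => hf (i + 1)) L (by omega)

lemma aux_lt_pow {p : ℕ} (hp : 1 < p) (f : ℕ → ℕ) (hf : ∀ i, f i < p) (L : ℕ) :
    ∑ i ∈ Finset.range L, f i * p ^ i < p ^ L := by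
  induction L with
  | zero => simp
  | succ L ih =>
    rw [Finset.sum_range_succ, pow_succ]
    obtain ⟨q, rfl⟩ : ∃ q, p = q + 1 := ⟨p - 1, by omega⟩
    have h1 : f L * (q + 1) ^ L ≤ q * (q + 1) ^ L :=
      Nat.mul_le_mul_right _ (by have := hf L; omega)
    have h2 : (q + 1) ^ L + q * (q + 1) ^ L = (q + 1) ^ L * (q + 1) := by ring
    omega

lemma aux_dvd_prod_sub {R : Type*} [CommRing R] (x y : R) (c : ℕ → R) (n : ℕ) :
    (x - y) ∣ (∏ k ∈ Finset.range n, (x - c k) - ∏ k ∈ Finset.range n, (y - c k)) := by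
  induction n with
  | zero => simp
  | succ n ih =>
    rw [Finset.prod_range_succ, Finset.prod_range_succ]
    have h : (∏ k ∈ Finset.range n, (x - c k)) * (x - c n)
          - (∏ k ∈ Finset.range n, (y - c k)) * (y - c n)
        = ((∏ k ∈ Finset.range n, (x - c k)) - ∏ k ∈ Finset.range n, (y - c k)) * (x - c n)
          + (∏ k ∈ Finset.range n, (y - c k)) * (x - y) := by ring
    rw [h]
    exact dvd_add (ih.mul_right _) (dvd_mul_left _ _)

lemma aux_prod_natCast {R : Type*} [CommRing R] (m n : ℕ) :
    ∏ k ∈ Finset.range n, ((m : R) - k) = (m.descFactorial n : R) := by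
  induction n with
  | zero => simp
  | succ n ih =>
    by_cases h : m < n + 1
    · rw [Nat.descFactorial_eq_zero_iff_lt.mpr h, Nat.cast_zero]
      exact Finset.prod_eq_zero (Finset.mem_range.mpr h) (by simp)
    · rw [Finset.prod_range_succ, ih, Nat.descFactorial_succ, Nat.cast_mul,
        Nat.cast_sub (by omega)]
      ring

lemma aux_coe_prod {p : ℕ} [Fact p.Prime] (g : ℕ → ℤ_[p]) (n : ℕ) :
    ((∏ k ∈ Finset.range n, g k : ℤ_[p]) : ℚ_[p]) = ∏ k ∈ Finset.range n, (g k : ℚ_[p]) := by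
  induction n with
  | zero => simp
  | succ n ih => rw [Finset.prod_range_succ, Finset.prod_range_succ, PadicInt.coe_mul, ih]
end Aux


/-- The generalized binomial coefficient `C(b,n) = b(b-1)⋯(b-n+1)/n!`, computed in `ℚ_[p]`
for a `p`-adic integer `b`. -/
noncomputable def padicChoose (p : ℕ) [Fact p.Prime] (b : ℤ_[p]) (n : ℕ) : ℚ_[p] :=
  (∏ k ∈ Finset.range n, ((b : ℚ_[p]) - (k : ℚ_[p]))) / (n.factorial : ℚ_[p])

/-- **Lucas' theorem for `p`-adic integers.**  If `b ∈ ℤ_p` has base-`p` digits `bdig 0, bdig 1, …`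
and `n ∈ ℕ` has base-`p` digits `ndig 0, …, ndig s`, then
`C(b,n) ≡ ∏_{i=0}^{s} C(bdig i, ndig i) (mod p)`. -/
theorem stmt_0 (p : ℕ) [Fact p.Prime] (b : ℤ_[p]) (n s : ℕ)
    (bdig : ℕ → ℕ) (hbdig : ∀ i, bdig i < p)
    (hb : b = ∑' i : ℕ, (bdig i : ℤ_[p]) * (p : ℤ_[p]) ^ i)
    (ndig : ℕ → ℕ) (hndig : ∀ i, ndig i < p)
    (hn : n = ∑ i ∈ Finset.range (s + 1), ndig i * p ^ i) :
    ‖padicChoose p b n -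
      ((∏ i ∈ Finset.range (s + 1), Nat.choose (bdig i) (ndig i) : ℕ) : ℚ_[p])‖
      ≤ ((p : ℝ))⁻¹ := by
  have hp1 : 1 < p := (Fact.out : p.Prime).one_lt
  have hpR : (1 : ℝ) < p := by exact_mod_cast hp1
  set L := n + s + 2 with hLdef
  set m := ∑ i ∈ Finset.range L, bdig i * p ^ i with hm
  set P := ∏ i ∈ Finset.range (s + 1), Nat.choose (bdig i) (ndig i) with hP
  -- padded digits of n
  set nd : ℕ → ℕ := fun i => if i < s + 1 then ndig i else 0 with hnd
  have hnd_lt : ∀ i, nd i < p := by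
    intro i; by_cases h : i < s + 1 <;> simp only [hnd, h, if_true, if_false] <;>
      [exact hndig i; omega]
  have hn' : n = ∑ i ∈ Finset.range L, nd i * p ^ i := by
    have e1 : ∑ i ∈ Finset.range (s + 1), ndig i * p ^ i
        = ∑ i ∈ Finset.range (s + 1), nd i * p ^ i :=
      Finset.sum_congr rfl fun i hi => by
        rw [hnd]; simp [Finset.mem_range.mp hi]
    rw [hn, e1]
    exact Finset.sum_subset (Finset.range_subset_range.mpr (by omega : s + 1 ≤ L))
      (fun x _ hx => by
        simp only [Finset.mem_range, not_lt] at hx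
        simp [hnd, Nat.not_lt.mpr hx, show ¬ x ≤ s by omega])
  have hnlt : n < p ^ L := by
    calc n < p ^ (s + 1) := by rw [hn]; exact aux_lt_pow hp1 ndig hndig (s + 1)
    _ ≤ p ^ L := Nat.pow_le_pow_right (by omega) (by omega : s + 1 ≤ L)
  have hmlt : m < p ^ L := aux_lt_pow hp1 bdig hbdig L
  -- Lucas
  have hlucas : m.choose n ≡ P [MOD p] := by
    have h := Choose.choose_modEq_prod_range_choose_nat (p := p) (n := m) (k := n)
      (a := L) hmlt hnlt
    have heq : ∏ i ∈ Finset.range L, Nat.choose (m / p ^ i % p) (n / p ^ i % p)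
        = ∏ i ∈ Finset.range L, Nat.choose (bdig i) (nd i) := by
      refine Finset.prod_congr rfl fun i hi => ?_
      rw [aux_digit hp1 i bdig hbdig L (Finset.mem_range.mp hi),
        hn', aux_digit hp1 i nd hnd_lt L (Finset.mem_range.mp hi)]
    rw [heq] at h
    have hprodeq : ∏ i ∈ Finset.range L, Nat.choose (bdig i) (nd i) = P := by
      rw [hP]
      have e1 : ∏ i ∈ Finset.range (s + 1), Nat.choose (bdig i) (ndig i)
          = ∏ i ∈ Finset.range (s + 1), Nat.choose (bdig i) (nd i) :=
        Finset.prod_congr rfl fun i hi => by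
          rw [hnd]; simp [Finset.mem_range.mp hi]
      rw [e1]
      exact (Finset.prod_subset (Finset.range_subset_range.mpr (by omega : s + 1 ≤ L))
        (fun x _ hx => by
          simp only [Finset.mem_range, not_lt] at hx
          simp [hnd, Nat.not_lt.mpr hx, show ¬ x ≤ s by omega])).symm
    rwa [hprodeq] at h
  have hA : ‖(m.choose n : ℚ_[p]) - (P : ℚ_[p])‖ ≤ (p : ℝ)⁻¹ := by
    have hdvd : ((p : ℤ)) ∣ (P : ℤ) - (m.choose n : ℤ) := by
      have := (Nat.modEq_iff_dvd (n := p)).mp hlucas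
      exact this
    have h1 : ‖(((P : ℤ) - (m.choose n : ℤ) : ℤ) : ℚ_[p])‖ ≤ (p : ℝ) ^ (-(1 : ℕ) : ℤ) :=
      (Padic.norm_int_le_pow_iff_dvd _ 1).mpr (by simpa using hdvd)
    rw [show (-(1 : ℕ) : ℤ) = -1 by norm_num, zpow_neg_one] at h1
    have h2 : (((P : ℤ) - (m.choose n : ℤ) : ℤ) : ℚ_[p]) = (P : ℚ_[p]) - (m.choose n : ℚ_[p]) := by
      push_cast; ring
    rw [h2] at h1
    rwa [norm_sub_rev] at h1
  -- Step B
  have hsum : Summable (fun i => (bdig i : ℤ_[p]) * (p : ℤ_[p]) ^ i) := by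
    refine Summable.of_norm_bounded
      (summable_geometric_of_lt_one (by positivity) (inv_lt_one_of_one_lt₀ hpR)) fun i => ?_
    rw [norm_mul, norm_pow, PadicInt.norm_p]
    exact mul_le_of_le_one_left (by positivity) (PadicInt.norm_le_one _)
  set M : ℤ_[p] := (m : ℤ_[p]) with hM
  have hMsum : M = ∑ i ∈ Finset.range L, (bdig i : ℤ_[p]) * (p : ℤ_[p]) ^ i := by
    rw [hM, hm]; push_cast; ring
  have hdvdbM : (p : ℤ_[p]) ^ L ∣ b - M := by
    have hsum' : Summable (fun i => (bdig (i + L) : ℤ_[p]) * (p : ℤ_[p]) ^ i) := by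
      refine Summable.of_norm_bounded
        (summable_geometric_of_lt_one (by positivity) (inv_lt_one_of_one_lt₀ hpR)) fun i => ?_
      rw [norm_mul, norm_pow, PadicInt.norm_p]
      exact mul_le_of_le_one_left (by positivity) (PadicInt.norm_le_one _)
    refine ⟨∑' i, (bdig (i + L) : ℤ_[p]) * (p : ℤ_[p]) ^ i, ?_⟩
    have ht := Summable.sum_add_tsum_nat_add (f := fun i => (bdig i : ℤ_[p]) * (p : ℤ_[p]) ^ i) L hsum
    rw [hb, hMsum, ← ht, add_sub_cancel_left]
    calc ∑' i, (bdig (i + L) : ℤ_[p]) * (p : ℤ_[p]) ^ (i + L)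
        = ∑' i, (p : ℤ_[p]) ^ L * ((bdig (i + L) : ℤ_[p]) * (p : ℤ_[p]) ^ i) := by
          exact tsum_congr fun i => by rw [pow_add]; ring
      _ = (p : ℤ_[p]) ^ L * ∑' i, (bdig (i + L) : ℤ_[p]) * (p : ℤ_[p]) ^ i :=
          hsum'.tsum_mul_left _
  obtain ⟨E, hE⟩ := dvd_trans hdvdbM
    (aux_dvd_prod_sub b M (fun k => (k : ℤ_[p])) n)
  have hfact_ne : ((n.factorial : ℚ_[p])) ≠ 0 := Nat.cast_ne_zero.mpr n.factorial_ne_zero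
  have hBexpr : padicChoose p b n - (m.choose n : ℚ_[p])
      = ((p : ℚ_[p]) ^ L * (E : ℚ_[p])) / (n.factorial : ℚ_[p]) := by
    have hprodm : ∏ k ∈ Finset.range n, ((m : ℚ_[p]) - k)
        = (n.factorial : ℚ_[p]) * (m.choose n : ℚ_[p]) := by
      rw [aux_prod_natCast, Nat.descFactorial_eq_factorial_mul_choose]; push_cast; ring
    have hcast : (((∏ k ∈ Finset.range n, (b - (k : ℤ_[p]))
          - ∏ k ∈ Finset.range n, (M - (k : ℤ_[p]))) : ℤ_[p]) : ℚ_[p])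
        = (∏ k ∈ Finset.range n, ((b : ℚ_[p]) - (k : ℚ_[p])))
          - ∏ k ∈ Finset.range n, ((m : ℚ_[p]) - (k : ℚ_[p])) := by
      rw [PadicInt.coe_sub, aux_coe_prod, aux_coe_prod]
      simp [hM, PadicInt.coe_sub, PadicInt.coe_natCast]
    rw [padicChoose, eq_div_iff hfact_ne, sub_mul, div_mul_cancel₀ _ hfact_ne]
    have : ((p : ℚ_[p]) ^ L * (E : ℚ_[p])) = (((p : ℤ_[p]) ^ L * E : ℤ_[p]) : ℚ_[p]) := by
      push_cast; ring
    rw [this, ← hE, hcast, hprodm]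
    ring
  have hB : ‖padicChoose p b n - (m.choose n : ℚ_[p])‖ ≤ (p : ℝ)⁻¹ := by
    rw [hBexpr, norm_div, norm_mul, norm_pow, Padic.norm_p,
      Padic.norm_eq_zpow_neg_valuation hfact_ne, Padic.valuation_natCast]
    have hvn : padicValNat p n.factorial ≤ n := by
      have h1 := sub_one_mul_padicValNat_factorial (p := p) n
      have h2 : padicValNat p n.factorial ≤ (p - 1) * padicValNat p n.factorial :=
        Nat.le_mul_of_pos_left _ (by omega)
      omega
    set v := padicValNat p n.factorial with hv
    have hppos : (0 : ℝ) < p := by positivity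
    have hE1 : ‖(E : ℚ_[p])‖ ≤ 1 := by
      rw [PadicInt.padic_norm_e_of_padicInt]; exact PadicInt.norm_le_one E
    have hpos : (0 : ℝ) < (p : ℝ) ^ (-(v : ℤ)) := by positivity
    calc ((p : ℝ)⁻¹) ^ L * ‖(E : ℚ_[p])‖ / (p : ℝ) ^ (-(v : ℤ))
        ≤ ((p : ℝ)⁻¹) ^ L * 1 / (p : ℝ) ^ (-(v : ℤ)) := by gcongr
      _ = (p : ℝ) ^ ((v : ℤ) - L) := by
          rw [mul_one, show ((p : ℝ)⁻¹) ^ L = (p : ℝ) ^ (-(L : ℤ)) by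
              rw [inv_pow, ← zpow_natCast (p : ℝ), ← zpow_neg],
            div_eq_mul_inv, ← zpow_neg, ← zpow_add₀ hppos.ne']
          congr 1
          ring
      _ ≤ (p : ℝ) ^ (-1 : ℤ) := zpow_le_zpow_right₀ hpR.le (by omega)
      _ = (p : ℝ)⁻¹ := zpow_neg_one _
  calc ‖padicChoose p b n - (P : ℚ_[p])‖
      = ‖(padicChoose p b n - (m.choose n : ℚ_[p])) + ((m.choose n : ℚ_[p]) - (P : ℚ_[p]))‖ := by
        rw [sub_add_sub_cancel]
    _ ≤ max ‖padicChoose p b n - (m.choose n : ℚ_[p])‖ ‖(m.choose n : ℚ_[p]) - (P : ℚ_[p])‖ :=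
        Padic.nonarchimedean _ _
    _ ≤ (p : ℝ)⁻¹ := max_le hB hA
end

section
/- Let b ∈ ℤ_p and n ∈ ℕ. If the p-adic valuation of the binomial coefficient C(b,n) is 0, then v_p(b) ≤ v_p(n). -/
open Finset

lemma prod_eq_descPochhammer (p : ℕ) [Fact p.Prime] (b : ℤ_[p]) (n : ℕ) :
    ∏ k ∈ Finset.range n, (b - (k : ℤ_[p])) = (descPochhammer ℤ_[p] n).eval b := by
  induction n with
  | zero => simp
  | succ n ih => rw [Finset.prod_range_succ, ih, descPochhammer_succ_eval]

lemma norm_padicChoose_le (p : ℕ) [Fact p.Prime] (b : ℤ_[p]) (n : ℕ) :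
    ‖padicChoose p b n‖ ≤ 1 := by
  have hfac : ((n.factorial : ℚ_[p])) ≠ 0 := by exact_mod_cast n.factorial_ne_zero
  have hprod : (∏ k ∈ Finset.range n, ((b : ℚ_[p]) - (k : ℚ_[p]))) =
      ((∏ k ∈ Finset.range n, (b - (k : ℤ_[p])) : ℤ_[p]) : ℚ_[p]) := by
    rw [show ((∏ k ∈ Finset.range n, (b - (k : ℤ_[p])) : ℤ_[p]) : ℚ_[p]) =
      ∏ k ∈ Finset.range n, (((b - (k : ℤ_[p])) : ℤ_[p]) : ℚ_[p]) from
        map_prod PadicInt.Coe.ringHom _ _]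
    push_cast
    rfl
  rw [padicChoose, hprod, prod_eq_descPochhammer, norm_div,
    div_le_one (by simpa using n.factorial_ne_zero)]
  rw [descPochhammer_eval_eq_ascPochhammer, PadicInt.padic_norm_e_of_padicInt,
    show ((n.factorial : ℚ_[p])) = (((n.factorial : ℤ_[p])) : ℚ_[p]) by norm_cast,
    PadicInt.padic_norm_e_of_padicInt]
  exact PadicInt.norm_ascPochhammer_le n _

/-- If the `p`-adic valuation of `C(b,n)` is `0` (i.e. `C(b,n)` is a `p`-adic unit), then
`v_p(b) ≤ v_p(n)`; equivalently, `‖n‖_p ≤ ‖b‖_p`. -/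
theorem stmt_1 (p : ℕ) [Fact p.Prime] (b : ℤ_[p]) (n : ℕ)
    (h : ‖padicChoose p b n‖ = 1) :
    ‖(n : ℚ_[p])‖ ≤ ‖(b : ℚ_[p])‖ := by
  obtain _ | m := n
  · simp
  set n := m + 1
  have hfacn : ((n.factorial : ℚ_[p])) ≠ 0 := by exact_mod_cast n.factorial_ne_zero
  have hfacm : ((m.factorial : ℚ_[p])) ≠ 0 := by exact_mod_cast m.factorial_ne_zero
  have key : (n : ℚ_[p]) * padicChoose p b n = (b : ℚ_[p]) * padicChoose p (b - 1) m := by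
    rw [padicChoose, padicChoose]
    have hsplit : (∏ k ∈ Finset.range n, ((b : ℚ_[p]) - (k : ℚ_[p]))) =
        (∏ k ∈ Finset.range m, (((b - 1 : ℤ_[p]) : ℚ_[p]) - (k : ℚ_[p]))) * (b : ℚ_[p]) := by
      rw [Finset.prod_range_succ']
      congr 1
      · refine Finset.prod_congr rfl fun k _ => ?_
        push_cast
        ring
      · simp
    rw [hsplit]
    have hfact : (n.factorial : ℚ_[p]) = (n : ℚ_[p]) * (m.factorial : ℚ_[p]) := by
      rw [Nat.factorial_succ]; push_cast [n]; ring
    rw [hfact]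
    have hn : (n : ℚ_[p]) ≠ 0 := by exact_mod_cast Nat.succ_ne_zero m
    field_simp
  have hnorm := congrArg norm key
  rw [norm_mul, norm_mul, h, mul_one] at hnorm
  rw [hnorm]
  exact mul_le_of_le_one_right (norm_nonneg _) (norm_padicChoose_le p (b - 1) m)
end

section
/- Let b ∈ ℤ_p be nonzero. Then the least natural number n ≥ 1 such that v_p(C(b,n)) = 0 is exactly p^{v_p(b)}. -/
open Finset

lemma norm_sub_nat (p : ℕ) [Fact p.Prime] (b : ℤ_[p]) (m : ℕ)
    (hm : ‖(b : ℚ_[p])‖ = (p : ℝ) ^ (-(m : ℤ))) (k : ℕ) (h1 : 1 ≤ k) (h2 : k < p ^ m) :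
    ‖(b : ℚ_[p]) - (k : ℚ_[p])‖ = ‖(k : ℚ_[p])‖ := by
  have hp1 : 1 < p := (Fact.out : p.Prime).one_lt
  have hdvd : ¬ ((p : ℤ) ^ m ∣ (k : ℤ)) := by
    rw [← Nat.cast_pow, Int.natCast_dvd_natCast]
    exact fun h => absurd (Nat.le_of_dvd h1 h) (not_le.mpr h2)
  have hk : ¬ (‖((k : ℤ) : ℚ_[p])‖ ≤ (p : ℝ) ^ (-(m : ℤ))) := by
    rw [Padic.norm_int_le_pow_iff_dvd]
    exact hdvd
  push_cast at hk
  have hne : ‖(b : ℚ_[p])‖ ≠ ‖-(k : ℚ_[p])‖ := by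
    rw [norm_neg, hm]
    exact fun h => hk (le_of_eq h.symm)
  have := Padic.add_eq_max_of_ne hne
  rw [sub_eq_add_neg, this, norm_neg, hm]
  rw [norm_neg] at *
  exact max_eq_right (le_of_lt (lt_of_not_ge fun h => hk h))

set_option maxHeartbeats 1000000 in
lemma norm_padicChoose (p : ℕ) [Fact p.Prime] (b : ℤ_[p]) (m : ℕ)
    (hm : ‖(b : ℚ_[p])‖ = (p : ℝ) ^ (-(m : ℤ))) (n : ℕ) (h1 : 1 ≤ n) (h2 : n ≤ p ^ m) :
    ‖padicChoose p b n‖ = (p : ℝ) ^ (-(m : ℤ)) / ‖(n : ℚ_[p])‖ := by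
  obtain ⟨n', rfl⟩ : ∃ n', n = n' + 1 := ⟨n - 1, by omega⟩
  have key : ∀ i ∈ Finset.range n', ‖(b : ℚ_[p]) - ((i + 1 : ℕ) : ℚ_[p])‖
      = ‖((i + 1 : ℕ) : ℚ_[p])‖ := by
    intro i hi
    rw [Finset.mem_range] at hi
    exact norm_sub_nat p b m hm (i + 1) (Nat.succ_le_succ (Nat.zero_le _)) (by omega)
  have hfac : ((n'.factorial : ℚ_[p])) ≠ 0 := by
    exact_mod_cast Nat.cast_ne_zero.mpr n'.factorial_ne_zero
  have hnz : (((n' + 1 : ℕ) : ℚ_[p])) ≠ 0 := by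
    exact Nat.cast_ne_zero.mpr (by omega)
  rw [padicChoose, norm_div, norm_prod]
  have hnum : (∏ k ∈ Finset.range (n' + 1), ‖(b : ℚ_[p]) - (k : ℚ_[p])‖)
      = ‖(n'.factorial : ℚ_[p])‖ * (p : ℝ) ^ (-(m : ℤ)) := by
    rw [Finset.prod_range_succ']
    simp only [Nat.cast_zero, sub_zero, hm]
    congr 1
    rw [Finset.prod_congr rfl (fun i hi => key i hi), ← norm_prod]
    congr 1
    rw [← Finset.prod_range_add_one_eq_factorial]
    push_cast
    rfl
  have hden : ‖((((n' + 1 : ℕ).factorial : ℕ) : ℚ_[p]))‖ = ‖((n' + 1 : ℕ) : ℚ_[p])‖ * ‖(n'.factorial : ℚ_[p])‖ := by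
    rw [Nat.factorial_succ]
    push_cast
    rw [norm_mul]
  rw [hnum, hden]
  have hf : ‖(n'.factorial : ℚ_[p])‖ ≠ 0 := norm_ne_zero_iff.mpr hfac
  have hg : ‖((n' + 1 : ℕ) : ℚ_[p])‖ ≠ 0 := norm_ne_zero_iff.mpr hnz
  rw [mul_comm ‖((n' + 1 : ℕ) : ℚ_[p])‖ ‖((n'.factorial : ℕ) : ℚ_[p])‖,
    mul_div_mul_left _ _ hf]


/-- For nonzero `b ∈ ℤ_p` with `v_p(b) = m`, the least `n ≥ 1` such that `v_p(C(b,n)) = 0`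
is exactly `p ^ m`. -/
theorem stmt_2 (p : ℕ) [Fact p.Prime] (b : ℤ_[p]) (hb : b ≠ 0) (m : ℕ)
    (hm : ‖(b : ℚ_[p])‖ = (p : ℝ) ^ (-(m : ℤ))) :
    IsLeast {n : ℕ | 1 ≤ n ∧ ‖padicChoose p b n‖ = 1} (p ^ m) := by
  have hp1 : 1 < p := (Fact.out : p.Prime).one_lt
  have hpm1 : 1 ≤ p ^ m := Nat.one_le_pow _ _ (by omega)
  have hppos : (0 : ℝ) < (p : ℝ) ^ (-(m : ℤ)) := by positivity
  constructor
  · refine ⟨hpm1, ?_⟩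
    rw [norm_padicChoose p b m hm (p ^ m) hpm1 le_rfl]
    have : ‖((p ^ m : ℕ) : ℚ_[p])‖ = (p : ℝ) ^ (-(m : ℤ)) := by
      push_cast
      exact Padic.norm_p_pow m
    rw [this, div_self (ne_of_gt hppos)]
  · rintro n ⟨hn1, hn⟩
    by_contra h
    push_neg at h
    rw [norm_padicChoose p b m hm n hn1 (le_of_lt h)] at hn
    have hg : ‖((n : ℕ) : ℚ_[p])‖ ≠ 0 :=
      norm_ne_zero_iff.mpr (Nat.cast_ne_zero.mpr (by omega))
    have heq : ‖((n : ℕ) : ℚ_[p])‖ = (p : ℝ) ^ (-(m : ℤ)) := by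
      rw [div_eq_one_iff_eq hg] at hn
      exact hn.symm
    have hdvd : (p : ℤ) ^ m ∣ (n : ℤ) := by
      rw [← Padic.norm_int_le_pow_iff_dvd]
      push_cast
      exact le_of_eq heq
    have : p ^ m ∣ n := by
      rw [← Nat.cast_pow, Int.natCast_dvd_natCast] at hdvd
      exact hdvd
    exact absurd (Nat.le_of_dvd (by omega) this) (not_le.mpr h)
end

section
/- Let G be a group carrying a p-valuation α, and let N be a normal subgroup of G such that G/N is torsion-free and x^p ∈ N implies x ∈ N. Suppose β : G → ℝ ∪ {∞} factors as β = β̄ ∘ q where q : G → G/N is the quotient map and β̄ is a p-valuation on G/N. Then ω = min{α, β} (pointwise infimum) is a p-valuation on G. -/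
open scoped commutatorElement
/-- A `p`-valuation on a group `G`, with values in `ℝ ∪ {∞}` encoded as `EReal`. -/
def IsPValuation (p : ℕ) {G : Type*} [Group G] (ω : G → EReal) : Prop :=
  (∀ x y : G, min (ω x) (ω y) ≤ ω (x * y⁻¹)) ∧
  (∀ x y : G, ω x + ω y ≤ ω ⁅x, y⁆) ∧
  (∀ x : G, ω x = ⊤ ↔ x = 1) ∧
  (∀ x : G, ((((p : ℝ) - 1)⁻¹ : ℝ) : EReal) < ω x) ∧
  (∀ x : G, ω (x ^ p) = ω x + 1)

/-- Lifting `p`-valuations: if `α` is a `p`-valuation on `G`, `N` is an isolated normal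
subgroup with torsion-free quotient, and `β` factors through a `p`-valuation `β̄` on `G/N`,
then the pointwise minimum `ω = min {α, β}` is a `p`-valuation on `G`. -/
theorem stmt_6 (p : ℕ) [Fact p.Prime] (G : Type*) [Group G]
    (α : G → EReal) (hα : IsPValuation p α)
    (N : Subgroup G) (hN : N.Normal)
    (htf : ∀ x : G ⧸ N, ∀ n : ℕ, 0 < n → x ^ n = 1 → x = 1)
    (hiso : ∀ x : G, x ^ p ∈ N → x ∈ N)
    (βbar : G ⧸ N → EReal) (hβ : IsPValuation p βbar) :
    IsPValuation p (fun x : G => min (α x) (βbar (QuotientGroup.mk x))) := by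
  obtain ⟨hα1, hα2, hα3, hα4, hα5⟩ := hα
  obtain ⟨hβ1, hβ2, hβ3, hβ4, hβ5⟩ := hβ
  refine ⟨?_, ?_, ?_, ?_, ?_⟩
  · intro x y
    have hq : (QuotientGroup.mk (x * y⁻¹) : G ⧸ N)
        = (QuotientGroup.mk x : G ⧸ N) * (QuotientGroup.mk y : G ⧸ N)⁻¹ := by
      simp
    refine le_min ?_ ?_
    · exact le_trans (min_le_min (min_le_left _ _) (min_le_left _ _)) (hα1 x y)
    · rw [hq]
      exact le_trans (min_le_min (min_le_right _ _) (min_le_right _ _)) (hβ1 _ _)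
  · intro x y
    have hc : (QuotientGroup.mk ⁅x, y⁆ : G ⧸ N)
        = ⁅(QuotientGroup.mk x : G ⧸ N), (QuotientGroup.mk y : G ⧸ N)⁆ :=
      map_commutatorElement (QuotientGroup.mk' N) x y
    refine le_min ?_ ?_
    · exact le_trans (add_le_add (min_le_left _ _) (min_le_left _ _)) (hα2 x y)
    · rw [hc]
      exact le_trans (add_le_add (min_le_right _ _) (min_le_right _ _)) (hβ2 _ _)
  · intro x
    simp only [min_eq_top]
    constructor
    · rintro ⟨h, -⟩
      exact (hα3 x).mp h
    · rintro rfl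
      exact ⟨(hα3 1).mpr rfl, (hβ3 1).mpr (by simp)⟩
  · intro x
    exact lt_min (hα4 x) (hβ4 _)
  · intro x
    have hb : (QuotientGroup.mk (x ^ p) : G ⧸ N) = (QuotientGroup.mk x : G ⧸ N) ^ p :=
      map_pow (QuotientGroup.mk' N) x p
    simp only [hα5 x, hb, hβ5]
    rcases le_total (α x) (βbar (QuotientGroup.mk x)) with h | h
    · rw [min_eq_left h, min_eq_left (add_le_add h (le_refl 1))]
    · rw [min_eq_right h, min_eq_right (add_le_add h (le_refl 1))]
end
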